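/- Let Γ be a finite group, Y ⊆ Ȳ Γ-modules with Ȳ/Y torsion and Ȳ torsion-free, S a finite Γ-set, Ṡ ⊆ S a set of orbit representatives. Let Ȳ[S,Ṡ]₀^N denote the set of f ∈ Ȳ[S,Ṡ]₀ with N_Γ(f) = 0. Then: Ȳ[S,Ṡ]₀^N / I_Γ·Y[S]₀ equals the torsion subgroup of Ȳ[S,Ṡ]₀ / I_Γ·Y[S]₀. That is: (a) if f ∈ Ȳ[S,Ṡ]₀ and n·f ∈ I_Γ·Y[S]₀ for some n > 0, then N_Γ(f) = 0; and (b) if N_Γ(f)=0 and the group ker(N_Γ)∩Y[S]₀ modulo I_Γ Y[S]₀ is finite (which holds as it is Ĥ^{-1} of a finitely generated module over a finite group), then some positive multiple of f lies in I_Γ·Y[S]₀ — given the hypothesis that Ĥ^{-1}(Γ, Y[S]₀) is finite. -/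
import Mathlib


/-- The subgroup `I_Γ·Y[S]₀` of `S → Ȳ` generated by elements `σg − g` for
`Y`-valued sum-zero `g`. -/
def Iaug (Γ S Ybar : Type) [Group Γ] [Fintype S] [MulAction Γ S]
    [AddCommGroup Ybar] [DistribMulAction Γ Ybar] (Y : AddSubgroup Ybar) :
    AddSubgroup (S → Ybar) :=
  AddSubgroup.closure
    {z : S → Ybar | ∃ (σ : Γ) (g : S → Ybar), (∀ w, g w ∈ Y) ∧ (∑ w : S, g w) = 0 ∧
      z = (fun w => σ • g (σ⁻¹ • w)) - g}

/-- `Ȳ[S,Ṡ]₀^{N_Γ} / I_Γ·Y[S]₀` equals the torsion subgroup of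
`Ȳ[S,Ṡ]₀ / I_Γ·Y[S]₀`:
(a) if a positive multiple of `f` lies in `I_Γ·Y[S]₀` then `f` is killed by the norm;
(b) conversely, assuming `Ĥ^{-1}(Γ, Y[S]₀)` has finite exponent, a norm-zero `f` has a
positive multiple in `I_Γ·Y[S]₀`. -/
theorem stmt7
    (Γ S : Type) [Group Γ] [Fintype Γ] [Fintype S] [MulAction Γ S]
    (Ybar : Type) [AddCommGroup Ybar] [DistribMulAction Γ Ybar]
    (htf : ∀ (n : ℕ), 0 < n → ∀ y : Ybar, n • y = 0 → y = 0)
    (Y : AddSubgroup Ybar) (hYstab : ∀ (σ : Γ) (y : Ybar), y ∈ Y → σ • y ∈ Y)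
    (htor : ∀ y : Ybar, ∃ n : ℕ, 0 < n ∧ n • y ∈ Y)
    (Sdot : Set S) :
    -- (a)
    (∀ f : S → Ybar, (∑ w : S, f w = 0) → (∀ w : S, w ∉ Sdot → f w ∈ Y) →
      ∀ n : ℕ, 0 < n → (n • f) ∈ Iaug Γ S Ybar Y →
      ∀ w : S, ∑ σ : Γ, σ • f (σ⁻¹ • w) = 0) ∧
    -- (b)
    ((∃ m : ℕ, 0 < m ∧ ∀ g : S → Ybar, (∀ w, g w ∈ Y) → (∑ w : S, g w = 0) →
        (∀ w : S, ∑ σ : Γ, σ • g (σ⁻¹ • w) = 0) → (m • g) ∈ Iaug Γ S Ybar Y) →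
      ∀ f : S → Ybar, (∑ w : S, f w = 0) → (∀ w : S, w ∉ Sdot → f w ∈ Y) →
        (∀ w : S, ∑ σ : Γ, σ • f (σ⁻¹ • w) = 0) →
        ∃ n : ℕ, 0 < n ∧ (n • f) ∈ Iaug Γ S Ybar Y) := by
 classical
  constructor
  · -- (a)
    intro f hsum hY n hn hmem w
    -- the norm at w as an additive hom
    let φ : (S → Ybar) →+ Ybar :=
      { toFun := fun h => ∑ σ : Γ, σ • h (σ⁻¹ • w)
        map_zero' := by simp
        map_add' := by
          intro a b
          simp [smul_add, Finset.sum_add_distrib] }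
    have hker : Iaug Γ S Ybar Y ≤ φ.ker := by
      rw [Iaug, AddSubgroup.closure_le]
      rintro z ⟨σ, g, hg, hgsum, rfl⟩
      simp only [SetLike.mem_coe, AddMonoidHom.mem_ker]
      show ∑ τ : Γ, τ • ((fun w => σ • g (σ⁻¹ • w)) - g) (τ⁻¹ • w) = 0
      have h1 : ∀ τ : Γ, τ • ((fun w => σ • g (σ⁻¹ • w)) - g) (τ⁻¹ • w)
          = (τ * σ) • g ((τ * σ)⁻¹ • w) - τ • g (τ⁻¹ • w) := by
        intro τ
        simp [Pi.sub_apply, smul_sub, mul_smul]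
      rw [Finset.sum_congr rfl (fun τ _ => h1 τ), Finset.sum_sub_distrib]
      have h2 : ∑ τ : Γ, (τ * σ) • g ((τ * σ)⁻¹ • w) = ∑ τ : Γ, τ • g (τ⁻¹ • w) :=
        Fintype.sum_equiv (Equiv.mulRight σ)
          (fun τ => (τ * σ) • g ((τ * σ)⁻¹ • w)) (fun τ => τ • g (τ⁻¹ • w))
          (fun τ => rfl)
      rw [h2, sub_self]
    have hnorm : φ (n • f) = 0 := hker hmem
    have hns : φ (n • f) = n • φ f := map_nsmul φ n f
    exact htf n hn _ (hns ▸ hnorm)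
  · -- (b)
    rintro ⟨m, hm, hmH⟩ f hsum hY hN
    -- find a positive k with k • f w ∈ Y for all w
    choose c hc hcY using fun w => htor (f w)
    let k : ℕ := ∏ w : S, c w
    have hk : 0 < k := Finset.prod_pos (fun w _ => hc w)
    have hkY : ∀ w : S, k • f w ∈ Y := by
      intro w
      have hdvd : c w ∣ k := Finset.dvd_prod_of_mem c (Finset.mem_univ w)
      obtain ⟨d, hd⟩ := hdvd
      rw [hd, mul_comm, mul_smul]
      exact AddSubgroup.nsmul_mem Y (hcY w) d
    have hg := hmH (k • f) (fun w => hkY w)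
      (by simp only [Pi.smul_apply, ← Finset.smul_sum, hsum, smul_zero])
      (by
        intro w
        have : ∑ σ : Γ, σ • (k • f) (σ⁻¹ • w) = k • ∑ σ : Γ, σ • f (σ⁻¹ • w) := by
          rw [Finset.smul_sum]
          exact Finset.sum_congr rfl (fun σ _ => by
            simp [Pi.smul_apply, smul_comm σ k])
        rw [this, hN w, smul_zero])
    refine ⟨m * k, Nat.mul_pos hm hk, ?_⟩
    rw [mul_smul]
    exact hg
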